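/- Let G=(V,E) be a finite simple graph and m ∈ ℕ_{>0}. If there exists an i with 1 ≤ i ≤ |V| − m + 1 such that every subset W ⊆ V with |W| = i satisfies |N(W)| ≥ m − 1, then ffn(G) ≥ m. -/

import Mathlib

open scoped Classical
noncomputable section

variable {V : Type*}

/-- The neighbourhood of a set of vertices: all vertices outside `S` adjacent to some
vertex of `S`. -/
def nbhd [Fintype V] (G : SimpleGraph V) (S : Finset V) : Finset V :=
  Finset.univ.filter fun v => v ∉ S ∧ ∃ u ∈ S, G.Adj u v

/-- The burning sets of a strategy `F` (where `F i` is the firefighter set at time `i`):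
`B 0 = V` and `B (t+1) = (B t \ F (t+1)) ∪ N(B t \ F (t+1))`. -/
def burn [Fintype V] (G : SimpleGraph V) (F : ℕ → Finset V) : ℕ → Finset V
  | 0 => Finset.univ
  | t + 1 => (burn G F t \ F (t + 1)) ∪ nbhd G (burn G F t \ F (t + 1))

/-- `F` is a `T`-winning `m`-strategy for `G`. -/
def WinningStrategy [Fintype V] (G : SimpleGraph V) (m T : ℕ) (F : ℕ → Finset V) : Prop :=
  (∀ i, (F i).card ≤ m) ∧ burn G F T = ∅

/-- The firefighter number of `G`: the least `m` admitting a winning `m`-strategy. -/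
def ffn [Fintype V] (G : SimpleGraph V) : ℕ :=
  sInf {m | ∃ T F, WinningStrategy G m T F}


/-- Lower bound: if there is an `i` with `1 ≤ i ≤ |V| - m + 1` such that every
vertex set of size `i` has at least `m - 1` neighbours, then `ffn G ≥ m`. -/
theorem ffn_lower_bound_neighbours [Fintype V] (G : SimpleGraph V) (m : ℕ) (hm : 0 < m)
    (h : ∃ i : ℕ, 1 ≤ i ∧ (i : ℤ) ≤ (Fintype.card V : ℤ) - m + 1 ∧
      ∀ W : Finset V, W.card = i → m - 1 ≤ (nbhd G W).card) :
    m ≤ ffn G := by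
  obtain ⟨i, hi1, hi2, hW⟩ := h
  have hcard : i + (m - 1) ≤ Fintype.card V := by omega
  -- key invariant lemma
  have key : ∀ (F : ℕ → Finset V), (∀ j, (F j).card ≤ m - 1) →
      ∀ t, i + (m - 1) ≤ (burn G F t).card := by
    intro F hF t
    induction t with
    | zero => simpa [burn] using hcard
    | succ t ih =>
      have h1 : i ≤ (burn G F t \ F (t + 1)).card := by
        have := Finset.le_card_sdiff (F (t + 1)) (burn G F t)
        have := hF (t + 1)
        omega
      obtain ⟨W, hWsub, hWcard⟩ := Finset.exists_subset_card_eq h1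
      have hN := hW W hWcard
      have hWsub' : W ⊆ burn G F (t + 1) := by
        intro v hv
        exact Finset.mem_union_left _ (hWsub hv)
      have hNsub : nbhd G W ⊆ burn G F (t + 1) := by
        intro v hv
        simp only [nbhd, Finset.mem_filter, Finset.mem_univ, true_and] at hv
        obtain ⟨hvW, u, huW, hadj⟩ := hv
        by_cases hvB : v ∈ burn G F t \ F (t + 1)
        · exact Finset.mem_union_left _ hvB
        · refine Finset.mem_union_right _ ?_
          simp only [nbhd, Finset.mem_filter, Finset.mem_univ, true_and]
          exact ⟨hvB, u, hWsub huW, hadj⟩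
      have hdisj : Disjoint W (nbhd G W) := by
        rw [Finset.disjoint_right]
        intro v hv
        simp only [nbhd, Finset.mem_filter] at hv
        exact hv.2.1
      calc i + (m - 1) ≤ W.card + (nbhd G W).card := by omega
        _ = (W ∪ nbhd G W).card := (Finset.card_union_of_disjoint hdisj).symm
        _ ≤ (burn G F (t + 1)).card :=
          Finset.card_le_card (Finset.union_subset hWsub' hNsub)
  apply le_csInf
  · refine ⟨Fintype.card V, 1, fun _ => Finset.univ, fun j => by simp, ?_⟩
    simp [burn, nbhd]
  · rintro k ⟨T, F, hFk, hT⟩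
    by_contra hlt
    push_neg at hlt
    have hk : ∀ j, (F j).card ≤ m - 1 := fun j => le_trans (hFk j) (by omega)
    have := key F hk T
    rw [hT] at this
    simp at this
    omega
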